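/- Let π be a permutation of ℤ/Nℤ and let v ⊆ ℤ/Nℤ, u = π⁻¹(v). Suppose v is contained in a union of pairwise disjoint circular intervals I_1,…,I_m, each satisfying |I_j ∩ v| ≥ 2, and u is contained in a union of pairwise disjoint circular intervals J_1,…,J_k, each satisfying |J_i ∩ u| ≥ 2, with m, k ≥ 1. Then there exist an odd ℓ ≥ 1 and pairwise distinct elements x_0, x_1, …, x_ℓ of u such that the π-weight satisfies w_π(x_0,…,x_ℓ) ≤ Σ_{j=1}^{m} L(I_j) + Σ_{i=1}^{k} L(J_i), where L(I) denotes the length of the circular interval I. -/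

import Mathlib

/-- Circular absolute value of a residue mod `N`: the smallest absolute value of an
integer congruent to `r` mod `N`. -/
def zabs {N : ℕ} (r : ZMod N) : ℕ := min r.val (-r).val

/-- Circular distance on `ZMod N`. -/
def cdist {N : ℕ} (x y : ZMod N) : ℕ := zabs (y - x)

/-- The sequence `x(r, x₀)` determined by `x₀` and `r` (with `r` indexed from 1). -/
def xseq {N : ℕ} (π : Equiv.Perm (ZMod N)) (r : ℕ → ZMod N) (x0 : ZMod N) : ℕ → ZMod N
  | 0 => x0
  | k + 1 =>
    if (k + 1) % 2 = 1 then π.symm (π (xseq π r x0 k) + r (k + 1))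
    else xseq π r x0 k + r (k + 1)

/-- The π-weight of the even-numbered sequence `x 0, …, x ℓ` (`ℓ` odd). -/
def pweight {N : ℕ} (π : Equiv.Perm (ZMod N)) (ℓ : ℕ) (x : ℕ → ZMod N) : ℕ :=
  (∑ i ∈ Finset.Icc 1 ((ℓ - 1) / 2), cdist (x (2 * i - 1)) (x (2 * i)))
    + cdist (x 0) (x ℓ)
    + ∑ i ∈ Finset.Icc 0 ((ℓ - 1) / 2), cdist (π (x (2 * i))) (π (x (2 * i + 1)))

/-- The norm `‖r‖ = |r 1| + ⋯ + |r ℓ|`. -/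
def rnorm {N : ℕ} (ℓ : ℕ) (r : ℕ → ZMod N) : ℕ := ∑ k ∈ Finset.Icc 1 ℓ, zabs (r k)

/-- `r` `M`-cycles at `x₀` (for the permutation `π`). -/
def Mcycles {N : ℕ} (π : Equiv.Perm (ZMod N)) (M : ℕ) (r : ℕ → ZMod N) (ℓ : ℕ)
    (x0 : ZMod N) : Prop :=
  pweight π ℓ (xseq π r x0) ≤ M

/-- The `(n1, n2)`-quasi-cyclic map on `ZMod (n1 * n2)` associated with `σ` and `X`:
`φ ∘ Π ∘ φ⁻¹` where `φ(i,j) = i·n2 + j` and `Π(i,j) = (i + X j mod n1, σ j)`. -/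
def qcFun (n1 n2 : ℕ) (σ : Equiv.Perm (ZMod n2)) (X : ZMod n2 → ZMod n1) :
    ZMod (n1 * n2) → ZMod (n1 * n2) :=
  fun x =>
    ((((x.val / n2 + (X ((x.val % n2 : ℕ) : ZMod n2)).val) % n1) * n2
        + (σ ((x.val % n2 : ℕ) : ZMod n2)).val : ℕ) : ZMod (n1 * n2))

/-- Norm of a finite sequence given as a list. -/
def rnormL {N : ℕ} (r : List (ZMod N)) : ℕ := (r.map zabs).sum

/-- A list `r = (r 1, …, r ℓ)` `M`-cycles at `x₀`. -/
def McyclesL {N : ℕ} (π : Equiv.Perm (ZMod N)) (M : ℕ) (r : List (ZMod N))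
    (x0 : ZMod N) : Prop :=
  Mcycles π M (fun k => r.getD (k - 1) 0) r.length x0

/-- `Z(π)`: the number of couples `(r, x₀)` with `r` of odd length, nonzero entries and
`‖r‖ < M`, that `M`-cycle at `x₀`. -/
noncomputable def Zcount {N : ℕ} (π : Equiv.Perm (ZMod N)) (M : ℕ) : ℕ :=
  Set.ncard {p : List (ZMod N) × ZMod N |
    Odd p.1.length ∧ (∀ a ∈ p.1, a ≠ 0) ∧ rnormL p.1 < M ∧ McyclesL π M p.1 p.2}

/-- Circular interval `{a, a+1, …, a+t}` of length `t`. -/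
def cInterval {N : ℕ} (a : ZMod N) (t : ℕ) : Set (ZMod N) :=
  {x | ∃ s ≤ t, x = a + (s : ZMod N)}

section Helpers

variable {N : ℕ}

lemma zabs_neg (r : ZMod N) : zabs (-r) = zabs r := by
  unfold zabs; rw [neg_neg, min_comm]

lemma zabs_sub_le {c c' : ℕ} (h : c ≤ c') (hlt : c' < N) :
    zabs ((c' : ZMod N) - (c : ZMod N)) ≤ c' - c := by
  have : NeZero N := ⟨by omega⟩
  have hz : ((c' : ZMod N) - c) = ((c' - c : ℕ) : ZMod N) := by
    have := Nat.cast_sub (R := ZMod N) h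
    rw [this]
  rw [hz]
  calc zabs ((c' - c : ℕ) : ZMod N) ≤ (((c' - c : ℕ) : ZMod N)).val := min_le_left _ _
    _ = c' - c := ZMod.val_cast_of_lt (by omega)

lemma cdist_le_of_mem {a : ZMod N} {t : ℕ} (ht : t < N) {x y : ZMod N}
    (hx : x ∈ cInterval a t) (hy : y ∈ cInterval a t) : cdist x y ≤ t := by
  obtain ⟨c, hc, rfl⟩ := hx
  obtain ⟨c', hc', rfl⟩ := hy
  rcases le_total c c' with h | h
  · have e : (a + (c' : ZMod N)) - (a + c) = (c' : ZMod N) - c := by ring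
    rw [cdist, e]
    exact le_trans (zabs_sub_le h (by omega)) (by omega)
  · have e : (a + (c' : ZMod N)) - (a + c) = -((c : ZMod N) - c') := by ring
    rw [cdist, e, zabs_neg]
    exact le_trans (zabs_sub_le h (by omega)) (by omega)

lemma sum_comp_le {α : Type*} [Fintype α] (g : α → ℕ) (f : ℕ → α) (d : ℕ)
    (hinj : ∀ q < d, ∀ q' < d, f q = f q' → q = q') :
    ∑ q ∈ Finset.range d, g (f q) ≤ ∑ j, g j := by
  classical
  rw [← Finset.sum_image (f := g) (g := f) (s := Finset.range d)
    (fun x hx y hy h => hinj x (Finset.mem_range.mp hx) y (Finset.mem_range.mp hy) h)]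
  exact Finset.sum_le_sum_of_subset (Finset.subset_univ _)

end Helpers

/-- Abstract cycle lemma: given an alternating cycle structure on a sequence `y`
with injective block assignments, conclude the theorem's existential. -/
lemma abstract_cycle (N : ℕ) (π : Equiv.Perm (ZMod N))
    (v : Set (ZMod N)) (m k : ℕ)
    (a : Fin m → ZMod N) (t : Fin m → ℕ) (ht : ∀ j, t j < N)
    (b : Fin k → ZMod N) (s : Fin k → ℕ) (hs : ∀ i, s i < N)
    (hdisjI : ∀ j j', j ≠ j' → Disjoint (cInterval (a j) (t j)) (cInterval (a j') (t j')))
    (hdisjJ : ∀ i i', i ≠ i' → Disjoint (cInterval (b i) (s i)) (cInterval (b i') (s i')))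
    (d : ℕ) (hd : 1 ≤ d) (y : ℕ → ZMod N) (fR : ℕ → Fin m) (fB : ℕ → Fin k)
    (hv : ∀ p ≤ 2*d - 1, π (y p) ∈ v)
    (hred : ∀ q < d, π (y (2*q)) ∈ cInterval (a (fR q)) (t (fR q)) ∧
        π (y (2*q+1)) ∈ cInterval (a (fR q)) (t (fR q)))
    (hblue1 : ∀ q < d, y (2*q+1) ∈ cInterval (b (fB q)) (s (fB q)))
    (hblue2 : ∀ q, q + 1 < d → y (2*q+2) ∈ cInterval (b (fB q)) (s (fB q)))
    (hblue0 : y 0 ∈ cInterval (b (fB (d-1))) (s (fB (d-1))))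
    (hRinj : ∀ q < d, ∀ q' < d, fR q = fR q' → q = q')
    (hBinj : ∀ q < d, ∀ q' < d, fB q = fB q' → q = q')
    (h01 : d = 1 → y 0 ≠ y 1) :
    ∃ ℓ : ℕ, Odd ℓ ∧ 1 ≤ ℓ ∧ ∃ x : ℕ → ZMod N,
      (∀ i ≤ ℓ, ∀ j ≤ ℓ, i ≠ j → x i ≠ x j) ∧
      (∀ i ≤ ℓ, x i ∈ ⇑π ⁻¹' v) ∧
      pweight π ℓ x ≤ (∑ j, t j) + ∑ i, s i := by
  have hmemR : ∀ r, r ≤ 2*d-1 → π (y r) ∈ cInterval (a (fR (r/2))) (t (fR (r/2))) := by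
    intro r hr
    obtain ⟨c, hc, hc2⟩ : ∃ c, (r = 2*c ∨ r = 2*c+1) ∧ r/2 = c := ⟨r/2, by omega, rfl⟩
    rw [hc2]
    rcases hc with rfl | rfl
    · exact (hred c (by omega)).1
    · exact (hred c (by omega)).2
  have hmemB : ∀ r, r ≤ 2*d-1 →
      y r ∈ cInterval (b (fB (if r = 0 then d-1 else (r-1)/2)))
        (s (fB (if r = 0 then d-1 else (r-1)/2))) := by
    intro r hr
    by_cases h0 : r = 0
    · subst h0; rw [if_pos rfl]; exact hblue0
    · rw [if_neg h0]
      obtain ⟨c, hc, hc2⟩ : ∃ c, (r = 2*c+1 ∨ r = 2*c+2) ∧ (r-1)/2 = c :=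
        ⟨(r-1)/2, by omega, rfl⟩
      rw [hc2]
      rcases hc with rfl | rfl
      · exact hblue1 c (by omega)
      · exact hblue2 c (by omega)
  refine ⟨2*d-1, ⟨d-1, by omega⟩, by omega, y, ?_, fun p hp => hv p hp, ?_⟩
  · -- distinctness
    intro p hp q hq hpq hEq
    have hpd : p/2 < d := by omega
    have hqd : q/2 < d := by omega
    have h1 : p/2 = q/2 := by
      apply hRinj _ hpd _ hqd
      by_contra hne
      exact Set.disjoint_left.mp (hdisjI _ _ hne) (hEq ▸ hmemR p hp) (hmemR q hq)
    have h2 : (if p = 0 then d-1 else (p-1)/2) = (if q = 0 then d-1 else (q-1)/2) := by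
      apply hBinj _ (by split_ifs <;> omega) _ (by split_ifs <;> omega)
      by_contra hne
      exact Set.disjoint_left.mp (hdisjJ _ _ hne) (hEq ▸ hmemB p hp) (hmemB q hq)
    by_cases hp0 : p = 0 <;> by_cases hq0 : q = 0
    · exact hpq (by omega)
    · subst hp0
      rw [if_pos rfl, if_neg hq0] at h2
      have hq1 : q = 1 := by omega
      subst hq1
      exact h01 (by omega) hEq
    · subst hq0
      rw [if_neg hp0, if_pos rfl] at h2
      have hp1 : p = 1 := by omega
      subst hp1
      exact h01 (by omega) hEq.symm
    · rw [if_neg hp0, if_neg hq0] at h2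
      omega
  · -- weight bound
    have hIcc : Finset.Icc 0 (d-1) = Finset.range d := by
      ext z; simp only [Finset.mem_Icc, Finset.mem_range]; omega
    have hredle : ∑ q ∈ Finset.Icc 0 (d-1), cdist (π (y (2*q))) (π (y (2*q+1))) ≤ ∑ j, t j := by
      calc ∑ q ∈ Finset.Icc 0 (d-1), cdist (π (y (2*q))) (π (y (2*q+1)))
          ≤ ∑ q ∈ Finset.Icc 0 (d-1), t (fR q) := by
            refine Finset.sum_le_sum fun q hq => ?_
            have hqd : q < d := by simp only [Finset.mem_Icc] at hq; omega
            exact cdist_le_of_mem (ht _) (hred q hqd).1 (hred q hqd).2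
        _ = ∑ q ∈ Finset.range d, t (fR q) := by rw [hIcc]
        _ ≤ ∑ j, t j := sum_comp_le t fR d hRinj
    have hbluele : (∑ q ∈ Finset.Icc 1 (d-1), cdist (y (2*q-1)) (y (2*q)))
        + cdist (y 0) (y (2*d-1)) ≤ ∑ i, s i := by
      have h1 : ∀ q ∈ Finset.Icc 1 (d-1), cdist (y (2*q-1)) (y (2*q)) ≤ s (fB (q-1)) := by
        intro q hq
        simp only [Finset.mem_Icc] at hq
        have e1 : 2*q - 1 = 2*(q-1)+1 := by omega
        have e2 : 2*q = 2*(q-1)+2 := by omega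
        rw [e1, e2]
        exact cdist_le_of_mem (hs _) (hblue1 (q-1) (by omega)) (hblue2 (q-1) (by omega))
      have h2 : cdist (y 0) (y (2*d-1)) ≤ s (fB (d-1)) := by
        have e : 2*d-1 = 2*(d-1)+1 := by omega
        rw [e]
        exact cdist_le_of_mem (hs _) hblue0 (hblue1 (d-1) (by omega))
      have hIm : Finset.Icc 1 (d-1) = (Finset.range (d-1)).image (· + 1) := by
        ext z
        simp only [Finset.mem_Icc, Finset.mem_image, Finset.mem_range]
        constructor
        · intro hz; exact ⟨z - 1, by omega, by omega⟩
        · rintro ⟨w, hw, rfl⟩; omega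
      calc (∑ q ∈ Finset.Icc 1 (d-1), cdist (y (2*q-1)) (y (2*q))) + cdist (y 0) (y (2*d-1))
          ≤ (∑ q ∈ Finset.Icc 1 (d-1), s (fB (q-1))) + s (fB (d-1)) :=
            add_le_add (Finset.sum_le_sum h1) h2
        _ = (∑ q ∈ Finset.range (d-1), s (fB q)) + s (fB (d-1)) := by
            rw [hIm, Finset.sum_image (by intro x _ y _ h; have h' : x + 1 = y + 1 := h; omega)]
            refine congrArg (· + s (fB (d-1))) (Finset.sum_congr rfl fun q _ => ?_)
            have e : q + 1 - 1 = q := by omega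
            rw [e]
        _ = ∑ q ∈ Finset.range d, s (fB q) := by
            rw [← Finset.sum_range_succ]
            have e : d - 1 + 1 = d := by omega
            rw [e]
        _ ≤ ∑ i, s i := sum_comp_le s fB d hBinj
    have hl : (2*d - 1 - 1)/2 = d - 1 := by omega
    unfold pweight
    rw [hl]
    omega

/-- combinatorial content of Lemma 3: if `v` is covered by disjoint
circular intervals each meeting `v` at least twice, and likewise `u = π⁻¹(v)`, then
there is an odd-length sequence of distinct elements of `u` whose `π`-weight is at
most the sum of all interval lengths. -/
theorem exists_low_pweight_cycle (N : ℕ) (hN : 2 ≤ N) (π : Equiv.Perm (ZMod N))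
    (v : Set (ZMod N)) (m k : ℕ) (hm : 1 ≤ m) (hk : 1 ≤ k)
    (a : Fin m → ZMod N) (t : Fin m → ℕ) (ht : ∀ j, t j < N)
    (b : Fin k → ZMod N) (s : Fin k → ℕ) (hs : ∀ i, s i < N)
    (hdisjI : ∀ j j', j ≠ j' → Disjoint (cInterval (a j) (t j)) (cInterval (a j') (t j')))
    (hvI : v ⊆ ⋃ j, cInterval (a j) (t j))
    (hvI2 : ∀ j, 2 ≤ (cInterval (a j) (t j) ∩ v).ncard)
    (hdisjJ : ∀ i i', i ≠ i' → Disjoint (cInterval (b i) (s i)) (cInterval (b i') (s i')))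
    (huJ : (⇑π ⁻¹' v) ⊆ ⋃ i, cInterval (b i) (s i))
    (huJ2 : ∀ i, 2 ≤ (cInterval (b i) (s i) ∩ (⇑π ⁻¹' v)).ncard) :
    ∃ ℓ : ℕ, Odd ℓ ∧ 1 ≤ ℓ ∧ ∃ x : ℕ → ZMod N,
      (∀ i ≤ ℓ, ∀ j ≤ ℓ, i ≠ j → x i ≠ x j) ∧
      (∀ i ≤ ℓ, x i ∈ ⇑π ⁻¹' v) ∧
      pweight π ℓ x ≤ (∑ j, t j) + ∑ i, s i := by
  classical
  haveI : NeZero N := ⟨by omega⟩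
  haveI : Nonempty (Fin m) := ⟨⟨0, hm⟩⟩
  haveI : Nonempty (Fin k) := ⟨⟨0, hk⟩⟩
  -- block index functions
  have hRex : ∀ x : ZMod N, ∃ j : Fin m, π x ∈ v → π x ∈ cInterval (a j) (t j) := by
    intro x
    by_cases hx : π x ∈ v
    · obtain ⟨j, hj⟩ := Set.mem_iUnion.mp (hvI hx)
      exact ⟨j, fun _ => hj⟩
    · exact ⟨Classical.arbitrary _, fun h => absurd h hx⟩
  choose R hRmem using hRex
  have hRuniq : ∀ x : ZMod N, π x ∈ v → ∀ j, π x ∈ cInterval (a j) (t j) → R x = j := by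
    intro x hx j hj
    by_contra hne
    exact Set.disjoint_left.mp (hdisjI _ _ hne) (hRmem x hx) hj
  have hBex : ∀ x : ZMod N, ∃ i : Fin k, π x ∈ v → x ∈ cInterval (b i) (s i) := by
    intro x
    by_cases hx : π x ∈ v
    · obtain ⟨i, hi⟩ := Set.mem_iUnion.mp (huJ (Set.mem_preimage.mpr hx))
      exact ⟨i, fun _ => hi⟩
    · exact ⟨Classical.arbitrary _, fun h => absurd h hx⟩
  choose B hBmem using hBex
  have hBuniq : ∀ x : ZMod N, π x ∈ v → ∀ i, x ∈ cInterval (b i) (s i) → B x = i := by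
    intro x hx i hi
    by_contra hne
    exact Set.disjoint_left.mp (hdisjJ _ _ hne) (hBmem x hx) hi
  -- mates
  have hmateRex : ∀ x : ZMod N, ∃ y, π x ∈ v → (y ≠ x ∧ π y ∈ v ∧ R y = R x) := by
    intro x
    by_cases hx : π x ∈ v
    · obtain ⟨u', hu', hne⟩ := Set.exists_ne_of_one_lt_ncard
        (lt_of_lt_of_le one_lt_two (hvI2 (R x))) (π x)
      have hπ : π (π.symm u') = u' := π.apply_symm_apply u'
      refine ⟨π.symm u', fun _ => ⟨?_, ?_, ?_⟩⟩
      · intro h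
        exact hne (by rw [← h, hπ])
      · rw [hπ]; exact hu'.2
      · exact hRuniq _ (by rw [hπ]; exact hu'.2) _ (by rw [hπ]; exact hu'.1)
    · exact ⟨x, fun h => absurd h hx⟩
  choose mateR hmateR using hmateRex
  have hmateBex : ∀ x : ZMod N, ∃ y, π x ∈ v → (y ≠ x ∧ π y ∈ v ∧ B y = B x) := by
    intro x
    by_cases hx : π x ∈ v
    · obtain ⟨y, hy, hne⟩ := Set.exists_ne_of_one_lt_ncard
        (lt_of_lt_of_le one_lt_two (huJ2 (B x))) x
      have hyv : π y ∈ v := hy.2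
      exact ⟨y, fun _ => ⟨hne, hyv, hBuniq y hyv _ hy.1⟩⟩
    · exact ⟨x, fun h => absurd h hx⟩
  choose mateB hmateB using hmateBex
  -- starting point
  obtain ⟨x0, hx0⟩ : ∃ x : ZMod N, π x ∈ v := by
    obtain ⟨y, hy, -⟩ := Set.exists_ne_of_one_lt_ncard
      (lt_of_lt_of_le one_lt_two (hvI2 ⟨0, hm⟩)) 0
    refine ⟨π.symm y, ?_⟩
    rw [π.apply_symm_apply]
    exact hy.2
  -- the alternating walk
  let W : ℕ → ZMod N := fun q => Nat.rec x0 (fun q ih => if q % 2 = 0 then mateR ih else mateB ih) q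
  have hWv : ∀ q, π (W q) ∈ v := by
    intro q
    induction q with
    | zero => exact hx0
    | succ q ih =>
      show π (if q % 2 = 0 then mateR (W q) else mateB (W q)) ∈ v
      split_ifs
      · exact (hmateR (W q) ih).2.1
      · exact (hmateB (W q) ih).2.1
  have hWodd : ∀ q, W (2*q+1) = mateR (W (2*q)) := by
    intro q
    show (if (2*q) % 2 = 0 then mateR (W (2*q)) else mateB (W (2*q))) = _
    rw [if_pos (by omega)]
  have hWeven : ∀ q, W (2*q+2) = mateB (W (2*q+1)) := by
    intro q
    show (if (2*q+1) % 2 = 0 then mateR (W (2*q+1)) else mateB (W (2*q+1))) = _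
    rw [if_neg (by omega)]
  have hstepR : ∀ q, R (W (2*q+1)) = R (W (2*q)) := fun q => by
    rw [hWodd q]; exact (hmateR (W (2*q)) (hWv (2*q))).2.2
  have hstepRne : ∀ q, W (2*q+1) ≠ W (2*q) := fun q => by
    rw [hWodd q]; exact (hmateR (W (2*q)) (hWv (2*q))).1
  have hstepB : ∀ q, B (W (2*q+2)) = B (W (2*q+1)) := fun q => by
    rw [hWeven q]; exact (hmateB (W (2*q+1)) (hWv (2*q+1))).2.2
  have hstepBne : ∀ q, W (2*q+2) ≠ W (2*q+1) := fun q => by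
    rw [hWeven q]; exact (hmateB (W (2*q+1)) (hWv (2*q+1))).1
  -- first repetition
  obtain ⟨n, hQn, hmin⟩ : ∃ n,
      ((n % 2 = 0 ∧ ∃ p < n/2, R (W (2*p)) = R (W (2*(n/2)))) ∨
        (n % 2 = 1 ∧ ∃ p < n/2, B (W (2*p+1)) = B (W (2*(n/2)+1)))) ∧
      ∀ q < n, ¬((q % 2 = 0 ∧ ∃ p < q/2, R (W (2*p)) = R (W (2*(q/2)))) ∨
        (q % 2 = 1 ∧ ∃ p < q/2, B (W (2*p+1)) = B (W (2*(q/2)+1)))) := by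
    have hQex : ∃ q, ((q % 2 = 0 ∧ ∃ p < q/2, R (W (2*p)) = R (W (2*(q/2)))) ∨
        (q % 2 = 1 ∧ ∃ p < q/2, B (W (2*p+1)) = B (W (2*(q/2)+1)))) := by
      obtain ⟨p, hp, q, hq, hne, heq⟩ := Finset.exists_ne_map_eq_of_card_lt_of_maps_to
        (s := Finset.range (m+1)) (t := (Finset.univ : Finset (Fin m)))
        (by simp) (fun p _ => Finset.mem_univ (R (W (2*p))))
      rcases Nat.lt_or_ge p q with h | h
      · refine ⟨2*q, Or.inl ⟨by omega, ?_⟩⟩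
        have e : 2*q/2 = q := by omega
        rw [e]
        exact ⟨p, h, heq⟩
      · have h' : q < p := by omega
        refine ⟨2*p, Or.inl ⟨by omega, ?_⟩⟩
        have e : 2*p/2 = p := by omega
        rw [e]
        exact ⟨q, h', heq.symm⟩
    exact ⟨Nat.find hQex, Nat.find_spec hQex, fun q hq => Nat.find_min hQex hq⟩
  rcases hQn with ⟨hpar, hex⟩ | ⟨hpar, hex⟩
  · -- red repetition case: n = 2*j
    obtain ⟨j, rfl⟩ : ∃ j, n = 2*j := ⟨n/2, by omega⟩
    have ej : 2*j/2 = j := by omega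
    rw [ej] at hex
    obtain ⟨p, hpj, heq⟩ := hex
    -- injectivity of R ∘ W ∘ (2*·) below j, and B below j
    have hAr : ∀ p₁ p₂, p₁ < j → p₂ < j → R (W (2*p₁)) = R (W (2*p₂)) → p₁ = p₂ := by
      intro p₁ p₂ h1 h2 he
      by_contra hne
      rcases Nat.lt_or_ge p₁ p₂ with h | h
      · refine hmin (2*p₂) (by omega) (Or.inl ⟨by omega, ?_⟩)
        have e : 2*p₂/2 = p₂ := by omega
        rw [e]
        exact ⟨p₁, h, he⟩
      · have h' : p₂ < p₁ := by omega
        refine hmin (2*p₁) (by omega) (Or.inl ⟨by omega, ?_⟩)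
        have e : 2*p₁/2 = p₁ := by omega
        rw [e]
        exact ⟨p₂, h', he.symm⟩
    have hAb : ∀ p₁ p₂, p₁ < j → p₂ < j → B (W (2*p₁+1)) = B (W (2*p₂+1)) → p₁ = p₂ := by
      intro p₁ p₂ h1 h2 he
      by_contra hne
      rcases Nat.lt_or_ge p₁ p₂ with h | h
      · refine hmin (2*p₂+1) (by omega) (Or.inr ⟨by omega, ?_⟩)
        have e : (2*p₂+1)/2 = p₂ := by omega
        rw [e]
        exact ⟨p₁, h, he⟩
      · have h' : p₂ < p₁ := by omega
        refine hmin (2*p₁+1) (by omega) (Or.inr ⟨by omega, ?_⟩)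
        have e : (2*p₁+1)/2 = p₁ := by omega
        rw [e]
        exact ⟨p₂, h', he.symm⟩
    refine abstract_cycle N π v m k a t ht b s hs hdisjI hdisjJ (j - p) (by omega)
      (fun r => if r = 0 then W (2*j) else W (2*p + r))
      (fun q => R (W (2*(p + q)))) (fun q => B (W (2*(p + q) + 1)))
      ?_ ?_ ?_ ?_ ?_ ?_ ?_ ?_
    · intro r _
      split_ifs <;> exact hWv _
    · intro q hq
      constructor
      · by_cases h0 : q = 0
        · subst h0
          have e0 : 2*0 = 0 := by omega
          rw [e0, if_pos rfl]
          have e1 : p + 0 = p := by omega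
          rw [e1, heq]
          exact hRmem _ (hWv (2*j))
        · rw [if_neg (by omega : ¬ 2*q = 0)]
          have e : 2*p + 2*q = 2*(p+q) := by ring
          rw [e]
          exact hRmem _ (hWv (2*(p+q)))
      · rw [if_neg (by omega : ¬ 2*q+1 = 0)]
        have e : 2*p + (2*q+1) = 2*(p+q)+1 := by ring
        rw [e, ← hstepR (p+q)]
        exact hRmem _ (hWv (2*(p+q)+1))
    · intro q hq
      rw [if_neg (by omega : ¬ 2*q+1 = 0)]
      have e : 2*p + (2*q+1) = 2*(p+q)+1 := by ring
      rw [e]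
      exact hBmem _ (hWv (2*(p+q)+1))
    · intro q hq
      rw [if_neg (by omega : ¬ 2*q+2 = 0)]
      have e : 2*p + (2*q+2) = 2*(p+q)+2 := by ring
      rw [e, ← hstepB (p+q)]
      exact hBmem _ (hWv (2*(p+q)+2))
    · rw [if_pos rfl]
      have e : 2*(p + (j - p - 1)) + 1 = 2*(j-1)+1 := by omega
      rw [e]
      have e2 : 2*j = 2*(j-1)+2 := by omega
      rw [e2, ← hstepB (j-1)]
      exact hBmem _ (hWv (2*(j-1)+2))
    · intro q hq q' hq' he
      have := hAr (p+q) (p+q') (by omega) (by omega) he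
      omega
    · intro q hq q' hq' he
      have := hAb (p+q) (p+q') (by omega) (by omega) he
      omega
    · intro hd1
      rw [if_pos rfl, if_neg (by omega : ¬ (1:ℕ) = 0)]
      have e : 2*j = 2*p+2 := by omega
      rw [e]
      exact hstepBne p
  · -- blue repetition case: n = 2*j+1
    obtain ⟨j, rfl⟩ : ∃ j, n = 2*j+1 := ⟨n/2, by omega⟩
    have ej : (2*j+1)/2 = j := by omega
    rw [ej] at hex
    obtain ⟨p, hpj, heq⟩ := hex
    have hAr : ∀ p₁ p₂, p₁ ≤ j → p₂ ≤ j → R (W (2*p₁)) = R (W (2*p₂)) → p₁ = p₂ := by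
      intro p₁ p₂ h1 h2 he
      by_contra hne
      rcases Nat.lt_or_ge p₁ p₂ with h | h
      · refine hmin (2*p₂) (by omega) (Or.inl ⟨by omega, ?_⟩)
        have e : 2*p₂/2 = p₂ := by omega
        rw [e]
        exact ⟨p₁, h, he⟩
      · have h' : p₂ < p₁ := by omega
        refine hmin (2*p₁) (by omega) (Or.inl ⟨by omega, ?_⟩)
        have e : 2*p₁/2 = p₁ := by omega
        rw [e]
        exact ⟨p₂, h', he.symm⟩
    have hAb : ∀ p₁ p₂, p₁ < j → p₂ < j → B (W (2*p₁+1)) = B (W (2*p₂+1)) → p₁ = p₂ := by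
      intro p₁ p₂ h1 h2 he
      by_contra hne
      rcases Nat.lt_or_ge p₁ p₂ with h | h
      · refine hmin (2*p₂+1) (by omega) (Or.inr ⟨by omega, ?_⟩)
        have e : (2*p₂+1)/2 = p₂ := by omega
        rw [e]
        exact ⟨p₁, h, he⟩
      · have h' : p₂ < p₁ := by omega
        refine hmin (2*p₁+1) (by omega) (Or.inr ⟨by omega, ?_⟩)
        have e : (2*p₁+1)/2 = p₁ := by omega
        rw [e]
        exact ⟨p₂, h', he.symm⟩
    refine abstract_cycle N π v m k a t ht b s hs hdisjI hdisjJ (j - p) (by omega)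
      (fun r => W (2*p + 2 + r))
      (fun q => R (W (2*(p + 1 + q)))) (fun q => if q = j - p - 1 then B (W (2*j+1)) else B (W (2*(p + 1 + q) + 1)))
      ?_ ?_ ?_ ?_ ?_ ?_ ?_ ?_
    · intro r _
      exact hWv _
    · intro q hq
      constructor
      · have e : 2*p + 2 + 2*q = 2*(p+1+q) := by ring
        rw [e]
        exact hRmem _ (hWv (2*(p+1+q)))
      · have e : 2*p + 2 + (2*q+1) = 2*(p+1+q)+1 := by ring
        rw [e, ← hstepR (p+1+q)]
        exact hRmem _ (hWv (2*(p+1+q)+1))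
    · intro q hq
      have e : 2*p + 2 + (2*q+1) = 2*(p+1+q)+1 := by ring
      rw [e]
      by_cases hq' : q = j - p - 1
      · rw [if_pos hq']
        have e2 : p + 1 + q = j := by omega
        rw [e2]
        exact hBmem _ (hWv (2*j+1))
      · rw [if_neg hq']
        exact hBmem _ (hWv (2*(p+1+q)+1))
    · intro q hq
      rw [if_neg (by omega : ¬ q = j - p - 1)]
      have e : 2*p + 2 + (2*q+2) = 2*(p+1+q)+2 := by ring
      rw [e, ← hstepB (p+1+q)]
      exact hBmem _ (hWv (2*(p+1+q)+2))
    · rw [if_pos rfl]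
      have e : 2*p + 2 + 0 = 2*p+2 := by omega
      rw [e, ← heq, ← hstepB p]
      exact hBmem _ (hWv (2*p+2))
    · intro q hq q' hq' he
      have := hAr (p+1+q) (p+1+q') (by omega) (by omega) he
      omega
    · intro q hq q' hq' he
      by_cases h1 : q = j - p - 1 <;> by_cases h2 : q' = j - p - 1
      · omega
      · rw [if_pos h1, if_neg h2, ← heq] at he
        have := hAb p (p+1+q') (by omega) (by omega) he
        omega
      · rw [if_neg h1, if_pos h2, ← heq] at he
        have := hAb (p+1+q) p (by omega) (by omega) he
        omega
      · rw [if_neg h1, if_neg h2] at he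
        have := hAb (p+1+q) (p+1+q') (by omega) (by omega) he
        omega
    · intro hd1
      have e1 : 2*p + 2 + 1 = 2*(p+1)+1 := by ring
      have e2 : 2*p + 2 + 0 = 2*(p+1) := by ring
      rw [e1, e2]
      exact (hstepRne (p+1)).symm
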